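/- Let L be a rank r geometric lattice with complete flag {0̂ = F_0 < ⋯ < F_r = 1̂}, and A_i = coat(F_i) \ coat(F_{i+1}). For every G ∈ L, the number of indices i ∈ {0, …, r−1} with coat(G) ∩ A_i ≠ ∅ equals corank(G) = r − rank(G). -/

import Mathlib

/-- A geometric lattice: a finite ranked lattice in which every element is a
join of atoms and the rank function is semimodular. -/
structure IsGeometricLattice (L : Type*) [Lattice L] [BoundedOrder L] [Finite L]
    (rk : L → ℕ) : Prop where
  rank_bot : rk ⊥ = 0
  rank_strictMono : StrictMono rk
  rank_covBy : ∀ x y : L, x ⋖ y → rk y = rk x + 1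
  atomistic : ∀ x : L, ∃ s : Finset L, (∀ a ∈ s, IsAtom a) ∧ x = s.sup id
  semimodular : ∀ x y : L, rk (x ⊓ y) + rk (x ⊔ y) ≤ rk x + rk y

/-- The set of coatoms of `L` lying above `X`. -/
def coatomsAbove {L : Type*} [Lattice L] [BoundedOrder L] (X : L) : Set L :=
  {C | IsCoatom C ∧ X ≤ C}

/-- A complete flag `⊥ = F 0 ⋖ F 1 ⋖ ⋯ ⋖ F r = ⊤` (a maximal chain) in a
rank `r` lattice, recorded as a sequence of covers. -/
def IsCompleteFlag {L : Type*} [Lattice L] [BoundedOrder L] {r : ℕ}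
    (F : Fin (r + 1) → L) : Prop :=
  F 0 = ⊥ ∧ F (Fin.last r) = ⊤ ∧ ∀ i : Fin r, F i.castSucc ⋖ F i.succ

section Aux

variable {L : Type*} [Lattice L] [BoundedOrder L] [Finite L] {rk : L → ℕ}

lemma IsGeometricLattice.eq_of_le_of_rk_le (hL : IsGeometricLattice L rk) {x y : L}
    (hxy : x ≤ y) (hrk : rk y ≤ rk x) : x = y := by
  rcases hxy.lt_or_eq with h | h
  · exact absurd (hL.rank_strictMono h) (by omega)
  · exact h

lemma IsGeometricLattice.rk_atom (hL : IsGeometricLattice L rk) {a : L} (ha : IsAtom a) :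
    rk a = 1 := by
  have := hL.rank_covBy ⊥ a ha.bot_covBy
  rw [this, hL.rank_bot]

lemma IsGeometricLattice.rk_sup_atom (hL : IsGeometricLattice L rk) {a : L} (X : L)
    (ha : IsAtom a) (hax : ¬ a ≤ X) : rk (X ⊔ a) = rk X + 1 := by
  have hinf : X ⊓ a = ⊥ := by
    rcases (inf_le_right : X ⊓ a ≤ a).lt_or_eq with h | h
    · exact ha.2 _ h
    · exact absurd (h ▸ inf_le_left) hax
  have hsm := hL.semimodular X a
  rw [hinf, hL.rank_bot, hL.rk_atom ha] at hsm
  have hlt : X < X ⊔ a := lt_of_le_of_ne le_sup_left (by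
    intro h; exact hax (h ▸ le_sup_right))
  have := hL.rank_strictMono hlt
  omega

/-- Key extension lemma: given `a` an atom not below `X`, there is a coatom above
`X` avoiding `a`. -/
lemma IsGeometricLattice.exists_coatom (hL : IsGeometricLattice L rk) {r : ℕ} (hr : rk ⊤ = r) :
    ∀ n (X a : L), r - rk X ≤ n → IsAtom a → ¬ a ≤ X →
      ∃ C, IsCoatom C ∧ X ≤ C ∧ ¬ a ≤ C := by
  intro n
  induction n with
  | zero =>
      intro X a hn ha hax
      have hXtop : X = ⊤ := by
        apply hL.eq_of_le_of_rk_le le_top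
        omega
      exact absurd (hXtop ▸ le_top) hax
  | succ n ih =>
      intro X a hn ha hax
      have hXlt : X < ⊤ := lt_of_le_of_ne le_top (by rintro rfl; exact hax le_top)
      have hrkX : rk X < r := hr ▸ hL.rank_strictMono hXlt
      have hXa : rk (X ⊔ a) = rk X + 1 := hL.rk_sup_atom X ha hax
      by_cases htop : X ⊔ a = ⊤
      · -- X is a coatom
        have hcoX : IsCoatom X := by
          refine ⟨hXlt.ne, fun Y hY => ?_⟩
          apply hL.eq_of_le_of_rk_le le_top
          have h1 : rk X < rk Y := hL.rank_strictMono hY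
          have hX1 : rk X + 1 = r := by rw [← hXa, htop, hr]
          have h2 : rk Y ≤ r := by
            rcases (le_top : Y ≤ ⊤).lt_or_eq with h | h
            · exact le_of_lt (hr ▸ hL.rank_strictMono h)
            · rw [h, hr]
          omega
        exact ⟨X, hcoX, le_rfl, hax⟩
      · -- pick an atom b ≤ ⊤ not below X ⊔ a
        obtain ⟨s, hs, hsup⟩ := hL.atomistic ⊤
        have : ∃ b ∈ s, ¬ (b ≤ X ⊔ a) := by
          by_contra hb
          push_neg at hb
          apply htop
          apply top_le_iff.mp
          rw [hsup]
          exact Finset.sup_le fun b hbs => hb b hbs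
        obtain ⟨b, hbs, hb⟩ := this
        have hbatom := hs b hbs
        have hbX : ¬ b ≤ X := fun h => hb (h.trans le_sup_left)
        have hrkXb : rk (X ⊔ b) = rk X + 1 := hL.rk_sup_atom X hbatom hbX
        have haXb : ¬ a ≤ X ⊔ b := by
          intro h
          have h1 : X ⊔ a ≤ X ⊔ b := sup_le le_sup_left h
          have h2 : X ⊔ a = X ⊔ b := hL.eq_of_le_of_rk_le h1 (by omega)
          exact hb (h2 ▸ le_sup_right)
        obtain ⟨C, hC, hXC, haC⟩ := ih (X ⊔ b) a (by omega) ha haXb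
        exact ⟨C, hC, le_sup_left.trans hXC, haC⟩

end Aux

/-- Counting lemma over `Fin`. -/
lemma count_strict_steps {r : ℕ} (h : Fin (r + 1) → ℕ) (hmono : Monotone h)
    (hstep : ∀ i : Fin r, h i.succ ≤ h i.castSucc + 1) :
    (Finset.univ.filter (fun i : Fin r => h i.castSucc < h i.succ)).card
      = h (Fin.last r) - h 0 := by
  set f : ℕ → ℕ := fun n => h ⟨min n r, by omega⟩ with hf
  have hfmono : Monotone f := fun m n hmn => hmono (Fin.mk_le_mk.mpr (by omega))
  have hcast : ∀ i (hi : i < r),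
      h (Fin.castSucc ⟨i, hi⟩) = f i ∧ h (Fin.succ ⟨i, hi⟩) = f (i + 1) := by
    intro i hi
    constructor
    · show _ = h _
      congr 1
      apply Fin.ext
      simp [Nat.min_eq_left hi.le]
    · show _ = h _
      congr 1
      apply Fin.ext
      simp [Nat.min_eq_left hi]
  calc (Finset.univ.filter (fun i : Fin r => h i.castSucc < h i.succ)).card
      = ∑ i : Fin r, (if h i.castSucc < h i.succ then 1 else 0) := by
        rw [Finset.card_filter]
    _ = ∑ i ∈ Finset.range r, (if f i < f (i + 1) then 1 else 0) := by
        rw [← Fin.sum_univ_eq_sum_range (fun i => if f i < f (i + 1) then 1 else 0) r]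
        apply Finset.sum_congr rfl
        intro i _
        obtain ⟨h1, h2⟩ := hcast i.1 i.2
        simp only [Fin.eta] at h1 h2
        rw [h1, h2]
    _ = ∑ i ∈ Finset.range r, (f (i + 1) - f i) := by
        apply Finset.sum_congr rfl
        intro i hi
        have hir := Finset.mem_range.mp hi
        have h1 : f i ≤ f (i + 1) := hfmono (by omega)
        obtain ⟨hc1, hc2⟩ := hcast i hir
        have h2 := hstep ⟨i, hir⟩
        rw [hc1, hc2] at h2
        split <;> omega
    _ = f r - f 0 := Finset.sum_range_tsub hfmono r
    _ = h (Fin.last r) - h 0 := by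
        have e1 : f r = h (Fin.last r) := by
          show h _ = _
          congr 1
          apply Fin.ext
          simp [Fin.last]
        have e2 : f 0 = h 0 := by
          show h _ = _
          congr 1
        rw [e1, e2]

/-- The number of indices `i` with `coat(G) ∩ A i ≠ ∅` equals the corank of `G`. -/
theorem card_nonempty_parts_eq_corank {L : Type*} [Lattice L] [BoundedOrder L] [Finite L]
    {rk : L → ℕ} (hL : IsGeometricLattice L rk) {r : ℕ} (hr : rk ⊤ = r)
    (F : Fin (r + 1) → L) (hF : IsCompleteFlag F)
    (A : Fin r → Set L)
    (hA : ∀ i : Fin r, A i = coatomsAbove (F i.castSucc) \ coatomsAbove (F i.succ))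
    (G : L) :
    {i : Fin r | (coatomsAbove G ∩ A i).Nonempty}.ncard = r - rk G := by
  obtain ⟨hF0, hFlast, hFcov⟩ := hF
  have hrkmono : Monotone rk := hL.rank_strictMono.monotone
  -- the rank step function
  set h : Fin (r + 1) → ℕ := fun i => rk (G ⊔ F i) with hh
  have hFmono : Monotone F := (Fin.strictMono_iff_lt_succ.mpr (fun i => (hFcov i).lt)).monotone
  have hhmono : Monotone h := fun i j hij => hrkmono (sup_le_sup_left (hFmono hij) G)
  have hhstep : ∀ i : Fin r, h i.succ ≤ h i.castSucc + 1 := by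
    intro i
    have hsm := hL.semimodular (G ⊔ F i.castSucc) (F i.succ)
    have h1 : rk (F i.castSucc) ≤ rk ((G ⊔ F i.castSucc) ⊓ F i.succ) :=
      hrkmono (le_inf (le_sup_right) (hFcov i).le)
    have h2 : rk (F i.succ) = rk (F i.castSucc) + 1 := hL.rank_covBy _ _ (hFcov i)
    have h3 : (G ⊔ F i.castSucc) ⊔ F i.succ = G ⊔ F i.succ := by
      rw [sup_assoc, sup_eq_right.mpr (hFcov i).le]
    simp only [hh]
    rw [← h3]
    omega
  -- key equivalence
  have hkey : ∀ i : Fin r, (coatomsAbove G ∩ A i).Nonempty ↔ h i.castSucc < h i.succ := by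
    intro i
    rw [hA i]
    constructor
    · rintro ⟨C, ⟨hCco, hGC⟩, ⟨⟨-, hFiC⟩, hnot⟩⟩
      have hle : G ⊔ F i.castSucc ≤ C := sup_le hGC hFiC
      rcases (hhmono (i.castSucc_le_succ)).lt_or_eq with hlt | heq
      · exact hlt
      · exfalso
        apply hnot
        refine ⟨hCco, ?_⟩
        have : G ⊔ F i.castSucc = G ⊔ F i.succ :=
          hL.eq_of_le_of_rk_le (sup_le_sup_left (hFcov i).le G) heq.ge
        exact le_sup_right.trans (this ▸ hle)
    · intro hlt
      -- F i.succ = F i.castSucc ⊔ a for some atom a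
      obtain ⟨s, hs, hsup⟩ := hL.atomistic (F i.succ)
      have : ∃ a ∈ s, ¬ a ≤ F i.castSucc := by
        by_contra hb
        push_neg at hb
        have : F i.succ ≤ F i.castSucc := hsup ▸ Finset.sup_le fun a has => hb a has
        exact absurd this (not_le_of_gt (hFcov i).lt)
      obtain ⟨a, has, haF⟩ := this
      have hatom := hs a has
      have haFsucc : a ≤ F i.succ := hsup ▸ Finset.le_sup (f := id) has
      have hFsucc_eq : F i.succ = F i.castSucc ⊔ a := by
        have h1 : F i.castSucc < F i.castSucc ⊔ a :=
          lt_of_le_of_ne le_sup_left (fun h => haF (h ▸ le_sup_right))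
        have h2 : F i.castSucc ⊔ a ≤ F i.succ := sup_le (hFcov i).le haFsucc
        rcases ((hFcov i).eq_or_eq le_sup_left h2 : _) with h | h
        · exact absurd h.symm h1.ne
        · exact h.symm
      have haX : ¬ a ≤ G ⊔ F i.castSucc := by
        intro hle
        have : G ⊔ F i.succ ≤ G ⊔ F i.castSucc := by
          rw [hFsucc_eq]
          exact sup_le le_sup_left (sup_le le_sup_right hle)
        have := hrkmono this
        simp only [hh] at hlt
        omega
      obtain ⟨C, hCco, hXC, haC⟩ :=
        hL.exists_coatom hr (r - rk (G ⊔ F i.castSucc)) (G ⊔ F i.castSucc) a le_rfl hatom haX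
      refine ⟨C, ⟨hCco, le_sup_left.trans hXC⟩, ⟨hCco, le_sup_right.trans hXC⟩, ?_⟩
      rintro ⟨-, hFC⟩
      exact haC (haFsucc.trans hFC)
  -- convert ncard to Finset and count
  have hset : {i : Fin r | (coatomsAbove G ∩ A i).Nonempty}
      = ↑(Finset.univ.filter (fun i : Fin r => h i.castSucc < h i.succ)) := by
    ext i
    simp [hkey i]
  rw [hset, Set.ncard_coe_finset, count_strict_steps h hhmono hhstep]
  simp only [hh]
  rw [hFlast, hF0, sup_top_eq, sup_bot_eq, hr]
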